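/- In the Algorithm 1 setting, for every integer 0 ≤ i ≤ 1/ε: ‖z⁽ⁱ⁾‖∞ ≤ 1 − (1−ε)^i and ‖y⁽ⁱ⁾‖∞ ≤ ‖y⁽ⁱ⁾⊛z⁽ⁱ⁾‖∞ ≤ 1 − (1−ε)^i·(1−m). -/

import Mathlib

open scoped InnerProductSpace
open Pointwise

noncomputable section

/-- Vectors in `ℝ^n`, with the Euclidean (ℓ₂) norm and inner product. -/
abbrev Vec (n : ℕ) := EuclideanSpace ℝ (Fin n)

/-- Membership in the box `[0,1]^n`. -/
def inBox {n : ℕ} (x : Vec n) : Prop := ∀ j, 0 ≤ x j ∧ x j ≤ 1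

/-- Coordinate-wise (Hadamard) product `x ⊙ y`. -/
def had {n : ℕ} (x y : Vec n) : Vec n := WithLp.toLp 2 (fun j => x j * y j)

/-- Coordinate-wise probabilistic sum `x ⊛ y`. -/
def psum {n : ℕ} (x y : Vec n) : Vec n := WithLp.toLp 2 (fun j => x j + y j - x j * y j)

/-- The vector `1 - x` (coordinate-wise). -/
def oneM {n : ℕ} (x : Vec n) : Vec n := WithLp.toLp 2 (fun j => 1 - x j)

/-- ℓ∞-norm. -/
def normInf {n : ℕ} (x : Vec n) : ℝ := ⨆ j, |x j|

/-- DR-submodularity of `F : [0,1]^n → ℝ`. -/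
def DRSubmodular {n : ℕ} (F : Vec n → ℝ) : Prop :=
  ∀ a b : Vec n, inBox a → inBox b → (∀ j, a j ≤ b j) →
    ∀ k : ℝ, 0 < k → ∀ i : Fin n, inBox (b + EuclideanSpace.single i k) →
      F (b + EuclideanSpace.single i k) - F b ≤ F (a + EuclideanSpace.single i k) - F a

/-- `P` is down-closed (with respect to the domain `[0,1]^n`). -/
def downClosed {n : ℕ} (P : Set (Vec n)) : Prop :=
  ∀ x y : Vec n, (∀ j, 0 ≤ x j) → (∀ j, x j ≤ y j) → y ∈ P → x ∈ P

/-- The Algorithm 1 setting: `Q ⊆ [0,1]^n` convex, `P ⊆ [0,1]^n` down-closed convex,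
`ε ∈ (0,1)` with `1/ε = N ∈ ℕ`, and sequences `y⁽ⁱ⁾, z⁽ⁱ⁾` built from `a⁽ⁱ⁾ ∈ Q`,
`b⁽ⁱ⁾ ∈ P` satisfying `a⁽ⁱ⁾ + b⁽ⁱ⁾ ⊙ (1 − y⁽ⁱ⁻¹⁾) ≤ 1`, via
`y⁽ⁱ⁾ = (1−ε)·y⁽ⁱ⁻¹⁾ + ε·a⁽ⁱ⁾` and `z⁽ⁱ⁾ = z⁽ⁱ⁻¹⁾ + ε·(1 − z⁽ⁱ⁻¹⁾) ⊙ b⁽ⁱ⁾`. -/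
structure Alg1Setting {n : ℕ} (Q P : Set (Vec n)) (ε : ℝ) (N : ℕ)
    (y z a b : ℕ → Vec n) : Prop where
  hQbox : ∀ x ∈ Q, inBox x
  hQconv : Convex ℝ Q
  hPbox : ∀ x ∈ P, inBox x
  hPconv : Convex ℝ P
  hPdown : downClosed P
  hε0 : 0 < ε
  hε1 : ε < 1
  hεN : (N : ℝ) * ε = 1
  hy0Q : y 0 ∈ Q
  hy0min : ∀ x ∈ Q, normInf (y 0) ≤ normInf x
  hz0 : z 0 = 0
  haQ : ∀ i, 1 ≤ i → i ≤ N → a i ∈ Q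
  hbP : ∀ i, 1 ≤ i → i ≤ N → b i ∈ P
  hfeas : ∀ i, 1 ≤ i → i ≤ N → ∀ j, a i j + b i j * (1 - y (i-1) j) ≤ 1
  hyrec : ∀ i, 1 ≤ i → i ≤ N → y i = (1-ε) • y (i-1) + ε • a i
  hzrec : ∀ i, 1 ≤ i → i ≤ N → z i = z (i-1) + ε • had (oneM (z (i-1))) (b i)

set_option maxHeartbeats 1000000 in
/-- Lemma 4.3 / `lem:normxy`: in the Algorithm 1 setting
(with `m = ‖y⁽⁰⁾‖∞`), for every `0 ≤ i ≤ 1/ε`, `‖z⁽ⁱ⁾‖∞ ≤ 1 − (1−ε)^i` and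
`‖y⁽ⁱ⁾‖∞ ≤ ‖y⁽ⁱ⁾ ⊛ z⁽ⁱ⁾‖∞ ≤ 1 − (1−ε)^i·(1−m)`. -/
theorem stmt_3 {n : ℕ} (Q P : Set (Vec n)) (ε : ℝ) (N : ℕ) (y z a b : ℕ → Vec n)
    (H : Alg1Setting Q P ε N y z a b)
    (m : ℝ) (hm : m = normInf (y 0)) :
    ∀ i ≤ N, normInf (z i) ≤ 1 - (1 - ε)^i ∧
      normInf (y i) ≤ normInf (psum (y i) (z i)) ∧
      normInf (psum (y i) (z i)) ≤ 1 - (1 - ε)^i * (1 - m) := by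
  obtain ⟨hQbox, hQconv, hPbox, hPconv, hPdown, hε0, hε1, hεN, hy0Q, hy0min, hz0,
    haQ, hbP, hfeas, hyrec, hzrec⟩ := H
  have hε0' : (0:ℝ) ≤ ε := le_of_lt hε0
  have hε1' : (0:ℝ) ≤ 1 - ε := by linarith
  have hm0 : 0 ≤ m := by
    rw [hm]; exact Real.iSup_nonneg (fun j => abs_nonneg _)
  have hm1 : m ≤ 1 := by
    rw [hm]
    exact Real.iSup_le (fun j => abs_le.mpr ⟨by linarith [(hQbox _ hy0Q j).1],
      (hQbox _ hy0Q j).2⟩) zero_le_one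
  have hy0m : ∀ j, y 0 j ≤ m := fun j => by
    rw [hm]
    simp only [normInf]
    exact le_trans (le_abs_self _)
      (le_ciSup (Set.Finite.bddAbove (Set.finite_range (fun j => |y 0 j|))) j)
  have key : ∀ i, i ≤ N → (∀ j, 0 ≤ y i j ∧ y i j ≤ 1) ∧
      (∀ j, 0 ≤ z i j ∧ z i j ≤ 1 - (1-ε)^i) ∧
      (∀ j, (1-ε)^i * (1 - m) ≤ (1 - y i j) * (1 - z i j)) := by
    intro i
    induction i with
    | zero =>
      intro _
      refine ⟨fun j => ⟨(hQbox _ hy0Q j).1, (hQbox _ hy0Q j).2⟩, ?_, ?_⟩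
      · intro j; rw [hz0]; simp
      · intro j; rw [hz0]; simp; nlinarith [hy0m j]
    | succ i IH =>
      intro hiN
      have hi1 : 1 ≤ i + 1 := Nat.le_add_left 1 i
      obtain ⟨IHy, IHz, IHp⟩ := IH (Nat.le_of_succ_le hiN)
      have hyr := hyrec (i+1) hi1 hiN
      have hzr := hzrec (i+1) hi1 hiN
      simp only [Nat.add_sub_cancel] at hyr hzr
      have hyv : ∀ j, y (i+1) j = (1-ε) * y i j + ε * a (i+1) j := by
        intro j; rw [hyr]; simp [PiLp.add_apply, PiLp.smul_apply, smul_eq_mul]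
      have hzv : ∀ j, z (i+1) j = z i j + ε * ((1 - z i j) * b (i+1) j) := by
        intro j; rw [hzr]; simp [PiLp.add_apply, PiLp.smul_apply, smul_eq_mul, had, oneM]
      have hpow : (0:ℝ) ≤ (1-ε)^i := pow_nonneg hε1' i
      refine ⟨?_, ?_, ?_⟩
      · intro j
        have hA := hQbox _ (haQ (i+1) hi1 hiN) j
        have hY := IHy j
        rw [hyv j]
        constructor <;> nlinarith [hA.1, hA.2, hY.1, hY.2]
      · intro j
        have hB := hPbox _ (hbP (i+1) hi1 hiN) j
        have hZ := IHz j
        have hZ1 : z i j ≤ 1 := le_trans hZ.2 (by linarith)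
        rw [hzv j]
        constructor
        · have h0 : (0:ℝ) ≤ ε * ((1 - z i j) * b (i+1) j) :=
            mul_nonneg hε0' (mul_nonneg (by linarith) hB.1)
          linarith [hZ.1]
        · rw [pow_succ]
          have h : (1-ε)^i * (1-ε) ≤ (1 - z i j) * (1 - ε * b (i+1) j) :=
            mul_le_mul (by linarith [hZ.2]) (by nlinarith [hB.2])
              (by linarith) (by linarith)
          have h2 : (1 - z i j) * (1 - ε * b (i+1) j)
              = 1 - (z i j + ε * ((1 - z i j) * b (i+1) j)) := by ring
          linarith
      · intro j
        have hA := hQbox _ (haQ (i+1) hi1 hiN) j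
        have hB := hPbox _ (hbP (i+1) hi1 hiN) j
        have hY := IHy j
        have hZ := IHz j
        have hZ1 : z i j ≤ 1 := le_trans hZ.2 (by linarith)
        have hf := hfeas (i+1) hi1 hiN j
        simp only [Nat.add_sub_cancel] at hf
        set A := a (i+1) j with hAd
        set B := b (i+1) j with hBd
        set Y := y i j with hYd
        set Z := z i j with hZd
        have h1 : B * (1 - Y) ≤ 1 - A := by linarith
        have step1 : (1 - Y) * ((1-ε) + ε * B) ≤ 1 - y (i+1) j := by
          rw [hyv j]
          nlinarith [h1]
        have step2 : 1 - z (i+1) j = (1 - Z) * (1 - ε * B) := by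
          rw [hzv j]; ring
        have hu0 : (0:ℝ) ≤ (1 - Y) * ((1-ε) + ε * B) := by
          apply mul_nonneg; linarith [hY.2]; nlinarith [hB.1]
        have hv0 : (0:ℝ) ≤ (1 - Z) * (1 - ε * B) := by
          apply mul_nonneg; linarith [hZ1]; nlinarith [hB.2]
        have hprod : (1-ε) ≤ ((1-ε) + ε * B) * (1 - ε * B) := by
          nlinarith [mul_nonneg (mul_nonneg (mul_nonneg hε0' hε0') hB.1)
            (sub_nonneg.mpr hB.2)]
        have step3 : (1 - Y) * (1 - Z) * (1-ε) ≤ (1 - y (i+1) j) * (1 - z (i+1) j) := by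
          rw [step2]
          calc (1 - Y) * (1 - Z) * (1-ε)
              ≤ (1 - Y) * (1 - Z) * (((1-ε) + ε * B) * (1 - ε * B)) := by
                apply mul_le_mul_of_nonneg_left hprod
                exact mul_nonneg (by linarith [hY.2]) (by linarith [hZ1])
            _ = ((1 - Y) * ((1-ε) + ε * B)) * ((1 - Z) * (1 - ε * B)) := by ring
            _ ≤ (1 - y (i+1) j) * ((1 - Z) * (1 - ε * B)) :=
                mul_le_mul_of_nonneg_right step1 hv0
        calc (1-ε)^(i+1) * (1 - m) = ((1-ε)^i * (1 - m)) * (1-ε) := by ring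
          _ ≤ (1 - Y) * (1 - Z) * (1-ε) :=
              mul_le_mul_of_nonneg_right (IHp j) hε1'
          _ ≤ _ := step3
  intro i hiN
  obtain ⟨hY, hZ, hP⟩ := key i hiN
  have hpow : (0:ℝ) ≤ (1-ε)^i := pow_nonneg hε1' i
  have hpow1 : (1-ε)^i ≤ 1 := pow_le_one₀ hε1' (by linarith)
  have hps : ∀ j, 0 ≤ psum (y i) (z i) j ∧ psum (y i) (z i) j ≤ 1 - (1-ε)^i * (1 - m) := by
    intro j
    have h1 := hY j; have h2 := hZ j
    have h2' : z i j ≤ 1 := le_trans h2.2 (by linarith)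
    have hp := hP j
    constructor
    · simp only [psum]; nlinarith
    · simp only [psum]; nlinarith
  have hbound0 : (0:ℝ) ≤ 1 - (1-ε)^i * (1 - m) := by nlinarith
  refine ⟨?_, ?_, ?_⟩
  · refine Real.iSup_le (fun j => ?_) (by nlinarith)
    have h := hZ j
    rw [abs_of_nonneg h.1]; exact h.2
  · refine Real.iSup_le (fun j => ?_) (Real.iSup_nonneg fun j => abs_nonneg _)
    refine le_trans ?_ (le_ciSup (Set.Finite.bddAbove (Set.finite_range
      (fun j => |psum (y i) (z i) j|))) j)
    have h1 := hY j; have h2 := hZ j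
    have h2' : z i j ≤ 1 := le_trans h2.2 (by linarith)
    rw [abs_of_nonneg h1.1, abs_of_nonneg (hps j).1]
    simp only [psum]; nlinarith
  · exact Real.iSup_le (fun j => abs_le.mpr ⟨by linarith [(hps j).1], (hps j).2⟩) hbound0
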